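/- Let W : E → K be an isometry between finite-dimensional Hilbert spaces, X a self-adjoint operator on K, and A a self-adjoint operator on E. Then for every ε > 0 there exists z > 0 such that U*(X ⊕ A)U ≤ (W*XW + εI_E) ⊕ (2zI_K) in the Loewner order, where U is the unitary dilation [[W, (I-WW*)^{1/2}], [0, -W*]] of W. -/

import Mathlib

open Matrix
open scoped ComplexOrder

/-- Any Hermitian matrix is dominated by a positive multiple of the identity. -/
lemma aux_exists_z {m : ℕ} (H : Matrix (Fin m) (Fin m) ℂ) (hH : H.IsHermitian) :
    ∃ z : ℝ, 0 < z ∧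
      ((2 * z : ℝ) • (1 : Matrix (Fin m) (Fin m) ℂ) - H).PosSemidef := by
  set c : ℝ := 1 + ∑ i, |hH.eigenvalues i| with hc
  have hc0 : 0 < c := by positivity
  refine ⟨c, hc0, ?_⟩
  have hle : ∀ i, 0 ≤ 2 * c - hH.eigenvalues i := by
    intro i
    have h1 : hH.eigenvalues i ≤ |hH.eigenvalues i| := le_abs_self _
    have h2 : |hH.eigenvalues i| ≤ ∑ j, |hH.eigenvalues j| :=
      Finset.single_le_sum (f := fun j => |hH.eigenvalues j|)
        (fun j _ => abs_nonneg _) (Finset.mem_univ i)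
    nlinarith
  set U : Matrix (Fin m) (Fin m) ℂ := (hH.eigenvectorUnitary : Matrix (Fin m) (Fin m) ℂ)
  have hU : U * star U = 1 := (Matrix.mem_unitaryGroup_iff).mp hH.eigenvectorUnitary.2
  have key : (2 * c : ℝ) • (1 : Matrix (Fin m) (Fin m) ℂ) - H =
      U * diagonal (fun i => ((2 * c - hH.eigenvalues i : ℝ) : ℂ)) * star U := by
    have hdiag : (diagonal (fun i => ((2 * c - hH.eigenvalues i : ℝ) : ℂ)) :
        Matrix (Fin m) (Fin m) ℂ) =
        (2 * c : ℝ) • 1 - diagonal (RCLike.ofReal ∘ hH.eigenvalues) := by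
      ext i j
      rcases eq_or_ne i j with rfl | hij
      · simp only [diagonal_apply_eq, Matrix.sub_apply, Matrix.smul_apply,
          Matrix.one_apply_eq, Function.comp_apply, RCLike.ofReal_alg]
        push_cast
        simp [Complex.real_smul]
      · simp [diagonal_apply_ne _ hij, Matrix.one_apply_ne hij]
    rw [hdiag, Matrix.mul_sub, Matrix.sub_mul]
    congr 1
    · rw [Matrix.mul_smul, Matrix.mul_one, Matrix.smul_mul, hU]
    · exact hH.spectral_theorem
  rw [key]
  have hd : Matrix.PosSemidef
      (diagonal (fun i => ((2 * c - hH.eigenvalues i : ℝ) : ℂ))) := by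
    refine Matrix.PosSemidef.diagonal fun i => ?_
    simpa using Complex.zero_le_real.2 (hle i)
  simpa [Matrix.star_eq_conjTranspose] using hd.mul_mul_conjTranspose_same U

/-- The square root of a positive semidefinite matrix, as `Matrix.PosSemidef.sqrt` was defined
in Mathlib (December 2024); it has since been removed from Mathlib. -/
noncomputable def Matrix.PosSemidef.sqrt {n 𝕜 : Type*} [Fintype n] [DecidableEq n] [RCLike 𝕜]
    {A : Matrix n n 𝕜} (hA : A.PosSemidef) : Matrix n n 𝕜 :=
  hA.1.eigenvectorUnitary.1 * diagonal ((↑) ∘ (√·) ∘ hA.1.eigenvalues) *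
    (star hA.1.eigenvectorUnitary : Matrix n n 𝕜)

lemma aux_sqrt_herm {m : ℕ} {R : Matrix (Fin m) (Fin m) ℂ} (hR : R.PosSemidef) :
    (hR.sqrt)ᴴ = hR.sqrt := by
  unfold Matrix.PosSemidef.sqrt
  simp [conjTranspose_mul, Matrix.mul_assoc, Matrix.star_eq_conjTranspose, diagonal_conjTranspose]
  rw [show star (Complex.ofReal ∘ (fun x => √x) ∘ hR.1.eigenvalues) =
      (Complex.ofReal ∘ (fun x => √x) ∘ hR.1.eigenvalues) from funext fun i => by simp]

lemma aux_sqrt_mul_self {m : ℕ} {R : Matrix (Fin m) (Fin m) ℂ} (hR : R.PosSemidef) :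
    hR.sqrt * hR.sqrt = R := by
  have hU : (star hR.1.eigenvectorUnitary : Matrix (Fin m) (Fin m) ℂ) *
      hR.1.eigenvectorUnitary.1 = 1 :=
    (Matrix.mem_unitaryGroup_iff').mp hR.1.eigenvectorUnitary.2
  unfold Matrix.PosSemidef.sqrt
  set U : Matrix (Fin m) (Fin m) ℂ := hR.1.eigenvectorUnitary.1
  set D : Matrix (Fin m) (Fin m) ℂ :=
    diagonal (RCLike.ofReal ∘ (fun x => √x) ∘ hR.1.eigenvalues)
  have e1 : U * D * star U * (U * D * star U) = U * D * (star U * U) * D * star U := by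
    simp only [Matrix.mul_assoc]
  have hU' : star U * U = 1 := hU
  have hD : D * D = diagonal (RCLike.ofReal ∘ hR.1.eigenvalues) := by
    rw [diagonal_mul_diagonal]
    congr 1
    funext i
    simp only [Function.comp_apply, ← RCLike.ofReal_mul, Real.mul_self_sqrt (hR.eigenvalues_nonneg i)]
  rw [e1, hU', Matrix.mul_one, Matrix.mul_assoc U D D, hD]
  exact hR.1.spectral_theorem.symm

/-- A block diagonal matrix with a zero block and a PSD block is PSD. -/
lemma aux_fromBlocks_psd {n m : ℕ} {R : Matrix (Fin m) (Fin m) ℂ} (hR : R.PosSemidef) :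
    (fromBlocks (0 : Matrix (Fin n) (Fin n) ℂ) 0 0 R).PosSemidef := by
  have : fromBlocks (0 : Matrix (Fin n) (Fin n) ℂ) 0 0 R =
      (fromBlocks 0 0 0 hR.sqrt)ᴴ * (fromBlocks (0 : Matrix (Fin n) (Fin n) ℂ) 0 0 hR.sqrt) := by
    rw [fromBlocks_conjTranspose, fromBlocks_multiply]
    simp [aux_sqrt_herm hR, aux_sqrt_mul_self hR]
  rw [this]
  exact Matrix.posSemidef_conjTranspose_mul_self _

theorem stmt1 (n m : ℕ) (W : Matrix (Fin m) (Fin n) ℂ)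
    (hW : Wᴴ * W = 1) (h1 : (1 - W * Wᴴ).PosSemidef)
    (X : Matrix (Fin m) (Fin m) ℂ) (hX : X.IsHermitian)
    (A : Matrix (Fin n) (Fin n) ℂ) (hA : A.IsHermitian) :
    ∀ ε : ℝ, 0 < ε → ∃ z : ℝ, 0 < z ∧
      (Matrix.fromBlocks (Wᴴ * X * W + (ε : ℂ) • 1) 0 0 ((2 * z : ℝ) • (1 : Matrix (Fin m) (Fin m) ℂ)) -
        (Matrix.fromBlocks W (Matrix.PosSemidef.sqrt h1) 0 (-Wᴴ))ᴴ * (Matrix.fromBlocks X 0 0 A) *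
          (Matrix.fromBlocks W (Matrix.PosSemidef.sqrt h1) 0 (-Wᴴ))).PosSemidef := by
  intro ε hε
  set P : Matrix (Fin m) (Fin m) ℂ := h1.sqrt with hPdef
  have hP : Pᴴ = P := aux_sqrt_herm h1
  set s : ℂ := (Real.sqrt ε : ℂ) with hsdef
  have hs0 : s ≠ 0 := by
    simp [hsdef, Complex.ofReal_ne_zero, Real.sqrt_ne_zero', hε]
  have hss : s * s = (ε : ℂ) := by
    rw [hsdef, ← Complex.ofReal_mul, Real.mul_self_sqrt hε.le]
  have hstars : star s = s := by
    rw [hsdef]; exact Complex.conj_ofReal _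
  set B : Matrix (Fin n) (Fin m) ℂ := s⁻¹ • -(Wᴴ * X * P) with hBdef
  have hsB : s • B = -(Wᴴ * X * P) := by
    rw [hBdef, smul_smul, mul_inv_cancel₀ hs0, one_smul]
  have hstarsinv : star s⁻¹ = s⁻¹ := by rw [star_inv₀, hstars]
  have hsBH : s • Bᴴ = -(P * X * W) := by
    have h := congrArg conjTranspose hsB
    simp only [conjTranspose_smul, hstars, conjTranspose_neg, conjTranspose_mul,
      conjTranspose_conjTranspose, hP, hX.eq, Matrix.mul_assoc] at h ⊢
    exact h
  set C : Matrix (Fin m) (Fin m) ℂ := P * X * P + W * A * Wᴴ with hCdef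
  set H : Matrix (Fin m) (Fin m) ℂ := C + Bᴴ * B with hHdef
  have hH : H.IsHermitian := by
    have h1h : (P * X * P).IsHermitian := by
      simp [Matrix.IsHermitian, conjTranspose_mul, Matrix.mul_assoc, hP, hX.eq]
    have h2h : (W * A * Wᴴ).IsHermitian := by
      simp [Matrix.IsHermitian, conjTranspose_mul, Matrix.mul_assoc, hA.eq]
    have h3h : (Bᴴ * B).IsHermitian := (Matrix.posSemidef_conjTranspose_mul_self B).1
    exact (h1h.add h2h).add h3h
  obtain ⟨z, hz, hR⟩ := aux_exists_z H hH
  refine ⟨z, hz, ?_⟩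
  set V : Matrix (Fin n ⊕ Fin m) (Fin n ⊕ Fin m) ℂ :=
    fromBlocks (s • 1) B 0 0 with hVdef
  have key : (Matrix.fromBlocks (Wᴴ * X * W + (ε : ℂ) • 1) 0 0
        ((2 * z : ℝ) • (1 : Matrix (Fin m) (Fin m) ℂ)) -
        (Matrix.fromBlocks W P 0 (-Wᴴ))ᴴ * (Matrix.fromBlocks X 0 0 A) *
          (Matrix.fromBlocks W P 0 (-Wᴴ))) =
      Vᴴ * V + fromBlocks 0 0 0 ((2 * z : ℝ) • (1 : Matrix (Fin m) (Fin m) ℂ) - H) := by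
    rw [hVdef, fromBlocks_conjTranspose, fromBlocks_conjTranspose,
      fromBlocks_multiply, fromBlocks_multiply, fromBlocks_multiply, fromBlocks_add,
      sub_eq_add_neg, fromBlocks_neg, fromBlocks_add]
    rw [fromBlocks_inj]
    refine ⟨?_, ?_, ?_, ?_⟩
    · simp only [conjTranspose_zero, conjTranspose_smul, conjTranspose_one, hstars,
        Matrix.mul_zero, Matrix.zero_mul, add_zero, zero_add,
        Matrix.smul_mul, Matrix.mul_smul, smul_smul, Matrix.one_mul, hss]
      abel
    · simp only [conjTranspose_zero, conjTranspose_smul, conjTranspose_one,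
        conjTranspose_neg, conjTranspose_conjTranspose, hstars,
        Matrix.mul_zero, Matrix.zero_mul, add_zero, zero_add,
        Matrix.smul_mul, Matrix.one_mul, hsB, Matrix.mul_neg, Matrix.neg_mul,
        neg_zero]
    · simp only [conjTranspose_zero, conjTranspose_smul, conjTranspose_one,
        conjTranspose_neg, conjTranspose_conjTranspose, hstars, hP,
        Matrix.mul_zero, Matrix.zero_mul, add_zero, zero_add,
        Matrix.mul_smul, Matrix.mul_one, hsBH, Matrix.mul_neg, Matrix.neg_mul, neg_neg]
    · simp only [conjTranspose_zero, conjTranspose_neg, conjTranspose_conjTranspose,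
        hP, hHdef, hCdef,
        Matrix.mul_zero, Matrix.zero_mul, add_zero, zero_add,
        Matrix.mul_neg, Matrix.neg_mul, neg_neg]
      abel
  rw [key]
  exact (Matrix.posSemidef_conjTranspose_mul_self V).add (aux_fromBlocks_psd hR)
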